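/- Let k ≥ 2. The maps r and s on 𝕊_{k−1} defined below satisfy the dihedral relations r^k = Id, s² = Id and (r∘s)² = Id, where Id is the identity map of 𝕊_{k−1}; hence they generate an action of the dihedral group D_k on 𝕊_{k−1}. -/

import Mathlib

open Finset

attribute [local instance] Classical.propDecidable

noncomputable section

/-- `π` is a permutation of `{1,…,k-1}` given in one-line notation
(`π p` is the entry at position `p`), normalized to `0` outside `[1,k-1]`. -/
def OneLine (k : ℕ) (π : ℕ → ℕ) : Prop :=
  Set.BijOn π (Set.Icc 1 (k - 1)) (Set.Icc 1 (k - 1)) ∧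
    ∀ p, p ∉ Set.Icc 1 (k - 1) → π p = 0

/-- The set `S(π)` of adjacent inversions of `π`:
those `i ∈ [1,k-2]` such that `i+1` appears before `i` in `π`. -/
def adjInvF (k : ℕ) (π : ℕ → ℕ) : Finset ℕ :=
  (Finset.Icc 1 (k - 2)).filter fun i =>
    ∃ p ∈ Finset.Icc 1 (k - 1), ∃ r ∈ Finset.Icc 1 (k - 1),
      p < r ∧ π p = i + 1 ∧ π r = i

/-- `W^π_{k,q}`: weakly increasing `(k-1)`-tuples with entries in `[0,q-1]`
that are strictly increasing at every adjacent inversion of `π`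
(vectors are functions `ℕ → ℕ` supported on `[1,k-1]`). -/
def W (k q : ℕ) (π : ℕ → ℕ) : Set (ℕ → ℕ) :=
  {v | (∀ i, i ∉ Finset.Icc 1 (k - 1) → v i = 0) ∧
       (∀ i ∈ Finset.Icc 1 (k - 1), v i ≤ q - 1) ∧
       (∀ i, 1 ≤ i → i + 1 ≤ k - 1 → v i ≤ v (i + 1)) ∧
       (∀ i ∈ adjInvF k π, v i < v (i + 1))}

/-- `x + e_{π_a} + e_{π_{a+1}} + ⋯ + e_{π_{b-1}}`. -/
def shift (π : ℕ → ℕ) (a b : ℕ) (x : ℕ → ℕ) : ℕ → ℕ :=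
  fun i => x i + if i ∈ (Finset.Icc a (b - 1)).image π then 1 else 0

/-- Adjacency in the graph `G^π_{k,q}`: one vertex is obtained from the other
by adding `e_{π_a} + ⋯ + e_{π_{b-1}}` for some `1 ≤ a < b ≤ k`. -/
def AdjRel (k : ℕ) (π : ℕ → ℕ) (x y : ℕ → ℕ) : Prop :=
  ∃ a b, 1 ≤ a ∧ a < b ∧ b ≤ k ∧ (y = shift π a b x ∨ x = shift π a b y)

/-- The number of maximal blocks of consecutive integers of a finite set `T ⊆ ℕ`. -/
def numBlocks (T : Finset ℕ) : ℕ := (T.filter fun t => t + 1 ∉ T).card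

/-- `cs_i(π)`: the number of pairs `1 ≤ a < b ≤ k` such that
`T_{a,b} = {π_a,…,π_{b-1}}` decomposes into exactly `i` maximal blocks
of consecutive integers. -/
def cs (k : ℕ) (π : ℕ → ℕ) (i : ℕ) : ℕ :=
  ((Finset.Icc 1 k ×ˢ Finset.Icc 1 k).filter fun p =>
    p.1 < p.2 ∧ numBlocks ((Finset.Icc p.1 (p.2 - 1)).image π) = i).card

/-- For `i < j`, `{i,j}` is an edge of `G_π` iff `{i,i+1,…,j-1}` occurs as
a set of consecutive entries of `π`. -/
def GpiEdge (k : ℕ) (π : ℕ → ℕ) (i j : ℕ) : Prop :=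
  ∃ a, 1 ≤ a ∧ a + (j - i) ≤ k ∧
    (Finset.Icc a (a + (j - i) - 1)).image π = Finset.Icc i (j - 1)

/-- Unordered adjacency in `G_π`. -/
def GpiAdjU (k : ℕ) (π : ℕ → ℕ) (i j : ℕ) : Prop :=
  (i < j ∧ GpiEdge k π i j) ∨ (j < i ∧ GpiEdge k π j i)

/-- The position of the value `v` in the one-line notation of `π`. -/
def posOf (k : ℕ) (π : ℕ → ℕ) (v : ℕ) : ℕ :=
  if h : ((Finset.Icc 1 (k - 1)).filter fun t => π t = v).Nonempty then
    ((Finset.Icc 1 (k - 1)).filter fun t => π t = v).min' h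
  else 0

/-- The rotation `r` on one-line permutations: if `π = π₁…π_{t-1}(k-1)π_{t+1}…π_{k-1}`,
then `r(π) = (π_{t+1}+1)…(π_{k-1}+1) 1 (π₁+1)…(π_{t-1}+1)`. -/
def rot (k : ℕ) (π : ℕ → ℕ) : ℕ → ℕ := fun p =>
  if p ∉ Finset.Icc 1 (k - 1) then 0
  else if p < k - posOf k π (k - 1) then π (posOf k π (k - 1) + p) + 1
  else if p = k - posOf k π (k - 1) then 1
  else π (p - (k - posOf k π (k - 1))) + 1

/-- The reflection `s` on one-line permutations: if `π = π₁…π_{i-1} 1 π_{i+1}…π_{k-1}`,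
then `s(π) = (k+1-π_{i-1})…(k+1-π₁) 1 (k+1-π_{k-1})…(k+1-π_{i+1})`. -/
def srefl (k : ℕ) (π : ℕ → ℕ) : ℕ → ℕ := fun p =>
  if p ∉ Finset.Icc 1 (k - 1) then 0
  else if p < posOf k π 1 then k + 1 - π (posOf k π 1 - p)
  else if p = posOf k π 1 then 1
  else k + 1 - π (k + posOf k π 1 - p)

/-- The rotation `ρ` of the vertex set `{1,…,k}`. -/
def rotV (k i : ℕ) : ℕ := if i < k then i + 1 else 1

/-- The reflection `σ` of the vertex set `{1,…,k}`. -/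
def sreflV (k i : ℕ) : ℕ := if i = 1 then 1 else k + 2 - i

/-- The maximal sorted family `(S₁,…,S_k)` associated with `σ`, `0`-indexed:
`sortedFam k σ (i-1) = S_i`. -/
def sortedFam (k : ℕ) (σ : ℕ → ℕ) : ℕ → Finset ℕ
  | 0 => insert 1 ((adjInvF k σ).image (· + 1))
  | j + 1 => insert (σ (j + 1) + 1) ((sortedFam k σ j).erase (σ (j + 1)))

/-- `ear(π)`. -/
def ear (k : ℕ) (π : ℕ → ℕ) : ℕ :=
  ((Finset.Icc 1 (k - 2)).filter fun i => π (i + 1) = π i + 1 ∨ π i = π (i + 1) + 1).card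
    + (({1, k - 1} : Finset ℕ) ∩ ({π 1, π (k - 1)} : Finset ℕ)).card

/-- `ε_i(π) = 1` if `i-1 ∈ S(π)` and `0` otherwise. -/
def eps (k : ℕ) (π : ℕ → ℕ) (i : ℕ) : ℕ := if i - 1 ∈ adjInvF k π then 1 else 0

/-- Extension of a vector with the conventions `x_k = q-1` (`x₀ = 0` holds by
the normalization of vectors in `W^π_{k,q}`). -/
def xext (k q : ℕ) (x : ℕ → ℕ) (i : ℕ) : ℕ := if i = k then q - 1 else x i

/-- The label list `L^π(x) = {i ∈ [1,k] : x_{i-1} < x_i - ε_i(π)}`. -/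
def labels (k q : ℕ) (π : ℕ → ℕ) (x : ℕ → ℕ) : Finset ℕ :=
  (Finset.Icc 1 k).filter fun i => xext k q x (i - 1) + eps k π i < xext k q x i

/-- A Sperner labeling of `G^π_{k,q}`. -/
def IsSperner (k q : ℕ) (π : ℕ → ℕ) (f : (ℕ → ℕ) → ℕ) : Prop :=
  (∀ x ∈ W k q π, f x = 0 ∨ f x ∈ labels k q π x) ∧
  (∀ x ∈ W k q π, ∀ y ∈ W k q π, AdjRel k π x y → f x = f y ∨ f x = 0 ∨ f y = 0)

/-- The entry `w` appears between the entries `u` and `v` in `π`. -/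
def Between (k : ℕ) (π : ℕ → ℕ) (u v w : ℕ) : Prop :=
  (posOf k π u < posOf k π w ∧ posOf k π w < posOf k π v) ∨
  (posOf k π v < posOf k π w ∧ posOf k π w < posOf k π u)

/-- A good set of colors for `π`. -/
def GoodSet (k : ℕ) (π : ℕ → ℕ) (C : Finset ℕ) : Prop :=
  C ⊆ Finset.Icc 1 k ∧
  (∀ i ∈ C, ∀ j ∈ C, i ≠ j → ¬ GpiAdjU k π i j) ∧
  (∀ a ∈ C, ∀ b ∈ C, 1 < a → a < b → b < k →
      ((Between k π (a - 1) b a ∨ Between k π (a - 1) b (b - 1)) ∧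
       (Between k π (b - 1) a (a - 1) ∨ Between k π (b - 1) a b))) ∧
  (1 ∈ C → ∀ b ∈ C, b ≠ 1 → Between k π 1 (b - 1) b) ∧
  (k ∈ C → ∀ b ∈ C, b ≠ k → Between k π b (k - 1) (b - 1))

/-- `x_a - x_{a-1} - ε_a(π)`, the `a`-th coordinate of the distance map `D`. -/
def dval (k q : ℕ) (π : ℕ → ℕ) (x : ℕ → ℕ) (a : ℕ) : ℕ :=
  xext k q x a - xext k q x (a - 1) - eps k π a

/-- The distance coloring determined by a set of colors `C`:
`x` gets color `a ∈ C` if `dval x a` is the unique maximum of `dval x` on `C`,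
and `0` otherwise. -/
def dcol (k q : ℕ) (π : ℕ → ℕ) (C : Finset ℕ) (x : ℕ → ℕ) : ℕ :=
  if h : ∃ a ∈ C, ∀ b ∈ C, b ≠ a → dval k q π x b < dval k q π x a then h.choose else 0

section DihedralAux

variable {k : ℕ} {π : ℕ → ℕ}

/-- The extension of a one-line permutation to `ZMod k` (sending `0` to `0`). -/
def hatP (k : ℕ) (π : ℕ → ℕ) : ZMod k → ZMod k := fun x => ((π x.val : ℕ) : ZMod k)

/-- Normalization: zero outside `[1,k-1]`, values inside `[1,k-1]` on `[1,k-1]`. -/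
def NormP (k : ℕ) (π : ℕ → ℕ) : Prop :=
  (∀ p, p ∉ Set.Icc 1 (k - 1) → π p = 0) ∧
    ∀ p, p ∈ Set.Icc 1 (k - 1) → π p ∈ Set.Icc 1 (k - 1)

lemma OneLine.normP (h : OneLine k π) : NormP k π :=
  ⟨h.2, fun p hp => h.1.1 hp⟩

lemma NormP.lt (h : NormP k π) (hk : 2 ≤ k) (p : ℕ) : π p < k := by
  by_cases hp : p ∈ Set.Icc 1 (k - 1)
  · have := h.2 p hp; simp only [Set.mem_Icc] at this; omega
  · rw [h.1 p hp]; omega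

lemma castk1 (hk : 2 ≤ k) : ((k - 1 : ℕ) : ZMod k) = -1 := by
  haveI : NeZero k := ⟨by omega⟩
  rw [Nat.cast_sub (by omega : 1 ≤ k)]
  simp [ZMod.natCast_self]

lemma hat_apply_nat (hk : 2 ≤ k) {p : ℕ} (hp : p < k) :
    hatP k π ((p : ℕ) : ZMod k) = ((π p : ℕ) : ZMod k) := by
  haveI : NeZero k := ⟨by omega⟩
  simp [hatP, ZMod.val_cast_of_lt hp]

lemma hat_zero (hk : 2 ≤ k) (h : NormP k π) : hatP k π 0 = 0 := by
  haveI : NeZero k := ⟨by omega⟩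
  have h0 : π 0 = 0 := h.1 0 (by simp [Set.mem_Icc])
  simp [hatP, ZMod.val_zero, h0]

lemma hat_eq_imp (hk : 2 ≤ k) {π' : ℕ → ℕ} (h : NormP k π) (h' : NormP k π')
    (he : ∀ x, hatP k π x = hatP k π' x) : π = π' := by
  haveI : NeZero k := ⟨by omega⟩
  funext p
  by_cases hp : p ∈ Set.Icc 1 (k - 1)
  · have hpk : p < k := by simp only [Set.mem_Icc] at hp; omega
    have := he ((p : ℕ) : ZMod k)
    rw [hat_apply_nat hk hpk, hat_apply_nat hk hpk] at this
    have h2 := congrArg ZMod.val this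
    rwa [ZMod.val_cast_of_lt (h.lt hk p), ZMod.val_cast_of_lt (h'.lt hk p)] at h2
  · rw [h.1 p hp, h'.1 p hp]

lemma hat_inj (hk : 2 ≤ k) (hπ : OneLine k π) : Function.Injective (hatP k π) := by
  haveI : NeZero k := ⟨by omega⟩
  intro x y hxy
  have hx := ZMod.val_lt x
  have hy := ZMod.val_lt y
  have hn : π x.val = π y.val := by
    have h2 := congrArg ZMod.val hxy
    rwa [hatP, hatP, ZMod.val_cast_of_lt (hπ.normP.lt hk _),
      ZMod.val_cast_of_lt (hπ.normP.lt hk _)] at h2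
  have hxy' : x.val = y.val := by
    by_cases hxv : x.val ∈ Set.Icc 1 (k - 1) <;> by_cases hyv : y.val ∈ Set.Icc 1 (k - 1)
    · exact hπ.1.2.1 hxv hyv hn
    · have h1 := hπ.1.1 hxv
      have h2 := hπ.2 _ hyv
      rw [hn, h2] at h1
      simp only [Set.mem_Icc] at h1; omega
    · have h1 := hπ.1.1 hyv
      have h2 := hπ.2 _ hxv
      rw [← hn, h2] at h1
      simp only [Set.mem_Icc] at h1; omega
    · simp only [Set.mem_Icc] at hxv hyv; omega
  calc x = ((x.val : ℕ) : ZMod k) := (ZMod.natCast_rightInverse x).symm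
    _ = ((y.val : ℕ) : ZMod k) := by rw [hxy']
    _ = y := ZMod.natCast_rightInverse y

lemma hat_bij (hk : 2 ≤ k) (hπ : OneLine k π) : Function.Bijective (hatP k π) := by
  haveI : NeZero k := ⟨by omega⟩
  exact Finite.injective_iff_bijective.mp (hat_inj hk hπ)

lemma oneline_of (hk : 2 ≤ k) (h : NormP k π) (hb : Function.Bijective (hatP k π)) :
    OneLine k π := by
  haveI : NeZero k := ⟨by omega⟩
  refine ⟨⟨fun p hp => h.2 p hp, ?_, ?_⟩, h.1⟩
  · intro p hp q hq hpq
    have hpk : p < k := by simp only [Set.mem_Icc] at hp; omega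
    have hqk : q < k := by simp only [Set.mem_Icc] at hq; omega
    have : hatP k π ((p : ℕ) : ZMod k) = hatP k π ((q : ℕ) : ZMod k) := by
      rw [hat_apply_nat hk hpk, hat_apply_nat hk hqk, hpq]
    have h2 := congrArg ZMod.val (hb.1 this)
    rwa [ZMod.val_cast_of_lt hpk, ZMod.val_cast_of_lt hqk] at h2
  · intro v hv
    have hvk : v < k := by simp only [Set.mem_Icc] at hv; omega
    obtain ⟨x, hx⟩ := hb.2 ((v : ℕ) : ZMod k)
    have hπx : π x.val = v := by
      have h2 := congrArg ZMod.val hx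
      rwa [hatP, ZMod.val_cast_of_lt (h.lt hk _), ZMod.val_cast_of_lt hvk] at h2
    have hmem : x.val ∈ Set.Icc 1 (k - 1) := by
      by_contra hc
      rw [h.1 _ hc] at hπx
      simp only [Set.mem_Icc] at hv; omega
    exact ⟨x.val, hmem, hπx⟩

lemma posOf_spec (hk : 2 ≤ k) (hπ : OneLine k π) {v : ℕ} (hv1 : 1 ≤ v) (hv2 : v ≤ k - 1) :
    1 ≤ posOf k π v ∧ posOf k π v ≤ k - 1 ∧ π (posOf k π v) = v := by
  obtain ⟨t, ht, hπt⟩ := hπ.1.surjOn (Set.mem_Icc.mpr ⟨hv1, hv2⟩)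
  simp only [Set.mem_Icc] at ht
  have hne : ((Finset.Icc 1 (k - 1)).filter fun t => π t = v).Nonempty :=
    ⟨t, by simp only [Finset.mem_filter, Finset.mem_Icc]; exact ⟨ht, hπt⟩⟩
  rw [posOf, dif_pos hne]
  have hmem := Finset.min'_mem _ hne
  simp only [Finset.mem_filter, Finset.mem_Icc] at hmem
  exact ⟨hmem.1.1, hmem.1.2, hmem.2⟩

lemma hat_posOf (hk : 2 ≤ k) (hπ : OneLine k π) {v : ℕ} (hv1 : 1 ≤ v) (hv2 : v ≤ k - 1) :
    hatP k π ((posOf k π v : ℕ) : ZMod k) = ((v : ℕ) : ZMod k) := by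
  obtain ⟨h1, h2, h3⟩ := posOf_spec hk hπ hv1 hv2
  rw [hat_apply_nat hk (by omega : posOf k π v < k), h3]

lemma rot_hat (hk : 2 ≤ k) (hπ : OneLine k π) (x : ZMod k) :
    hatP k (rot k π) x =
      hatP k π (x + ((posOf k π (k - 1) : ℕ) : ZMod k)) + 1 := by
  haveI : NeZero k := ⟨by omega⟩
  obtain ⟨hT1, hT2, hπT⟩ := posOf_spec hk hπ (by omega : 1 ≤ k - 1) (le_refl (k - 1))
  set T := posOf k π (k - 1) with hTdef
  have hTk : T < k := by omega
  have hxk : x.val < k := ZMod.val_lt x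
  have hadd : (x + ((T : ℕ) : ZMod k)).val = (x.val + T) % k := by
    rw [ZMod.val_add, ZMod.val_cast_of_lt hTk]
  simp only [hatP, hadd]
  set p := x.val with hpdef
  rcases Nat.lt_trichotomy p (k - T) with hlt | heq | hgt
  · rcases Nat.eq_zero_or_pos p with h0 | h1
    · have hr : rot k π p = 0 := by
        rw [rot, if_pos]; simp [Finset.mem_Icc, h0]
      have hm : (p + T) % k = T := by rw [h0]; simpa using Nat.mod_eq_of_lt hTk
      rw [hr, hm, hπT, castk1 hk]
      simp
    · have hr : rot k π p = π (T + p) + 1 := by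
        rw [rot, if_neg (by simp only [Finset.mem_Icc, not_not]; omega), if_pos hlt]
      have hm : (p + T) % k = p + T := Nat.mod_eq_of_lt (by omega)
      rw [hr, hm]
      have : T + p = p + T := by omega
      rw [this]
      push_cast
      ring
  · have hr : rot k π p = 1 := by
      rw [rot, if_neg (by simp only [Finset.mem_Icc, not_not]; omega),
        if_neg (by omega), if_pos heq]
    have hm : (p + T) % k = 0 := by
      have : p + T = k := by omega
      simp [this]
    have h0 : π 0 = 0 := hπ.2 0 (by simp [Set.mem_Icc])
    rw [hr, hm, h0]
    simp
  · have hr : rot k π p = π (p - (k - T)) + 1 := by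
      rw [rot, if_neg (by simp only [Finset.mem_Icc, not_not]; omega),
        if_neg (by omega), if_neg (by omega)]
    have hm : (p + T) % k = p + T - k := by
      rw [Nat.mod_eq_sub_mod (by omega : k ≤ p + T)]
      exact Nat.mod_eq_of_lt (by omega)
    have harg : p - (k - T) = p + T - k := by omega
    rw [hr, hm, harg]
    push_cast
    ring

lemma rot_norm (hk : 2 ≤ k) (hπ : OneLine k π) : NormP k (rot k π) := by
  obtain ⟨hT1, hT2, hπT⟩ := posOf_spec hk hπ (by omega : 1 ≤ k - 1) (le_refl (k - 1))
  set T := posOf k π (k - 1) with hTdef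
  constructor
  · intro p hp
    rw [rot, if_pos]
    simpa [Finset.mem_Icc, Set.mem_Icc] using hp
  · intro p hp
    simp only [Set.mem_Icc] at hp
    have hmemT : T ∈ Set.Icc 1 (k - 1) := Set.mem_Icc.mpr ⟨hT1, hT2⟩
    rcases Nat.lt_trichotomy p (k - T) with hlt | heq | hgt
    · rw [rot, if_neg (by simp only [Finset.mem_Icc, not_not]; omega), if_pos hlt, ← hTdef]
      have harg : T + p ∈ Set.Icc 1 (k - 1) := Set.mem_Icc.mpr ⟨by omega, by omega⟩
      have hval := hπ.1.1 harg
      simp only [Set.mem_Icc] at hval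
      have hne : π (T + p) ≠ k - 1 := by
        intro he
        have := hπ.1.2.1 harg hmemT (he.trans hπT.symm)
        omega
      simp only [Set.mem_Icc]; omega
    · rw [rot, if_neg (by simp only [Finset.mem_Icc, not_not]; omega),
        if_neg (by omega), if_pos heq]
      simp only [Set.mem_Icc]; omega
    · rw [rot, if_neg (by simp only [Finset.mem_Icc, not_not]; omega),
        if_neg (by omega), if_neg (by omega), ← hTdef]
      have harg : p - (k - T) ∈ Set.Icc 1 (k - 1) := Set.mem_Icc.mpr ⟨by omega, by omega⟩
      have hval := hπ.1.1 harg
      simp only [Set.mem_Icc] at hval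
      have hne : π (p - (k - T)) ≠ k - 1 := by
        intro he
        have := hπ.1.2.1 harg hmemT (he.trans hπT.symm)
        omega
      simp only [Set.mem_Icc]; omega

lemma rot_oneline (hk : 2 ≤ k) (hπ : OneLine k π) : OneLine k (rot k π) := by
  haveI : NeZero k := ⟨by omega⟩
  refine oneline_of hk (rot_norm hk hπ) ⟨?_, ?_⟩
  · intro x y hxy
    rw [rot_hat hk hπ, rot_hat hk hπ] at hxy
    have h2 := add_right_cancel hxy
    have h3 := hat_inj hk hπ h2
    exact add_right_cancel h3
  · intro y
    obtain ⟨z, hz⟩ := (hat_bij hk hπ).2 (y - 1)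
    refine ⟨z - ((posOf k π (k - 1) : ℕ) : ZMod k), ?_⟩
    rw [rot_hat hk hπ, sub_add_cancel, hz]
    ring

lemma srefl_hat (hk : 2 ≤ k) (hπ : OneLine k π) (x : ZMod k) :
    hatP k (srefl k π) x =
      1 - hatP k π (((posOf k π 1 : ℕ) : ZMod k) - x) := by
  haveI : NeZero k := ⟨by omega⟩
  obtain ⟨hI1, hI2, hπI⟩ := posOf_spec hk hπ (le_refl 1) (by omega : 1 ≤ k - 1)
  set I := posOf k π 1 with hIdef
  have hIk : I < k := by omega
  have hxk : x.val < k := ZMod.val_lt x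
  have hx : ((x.val : ℕ) : ZMod k) = x := ZMod.natCast_rightInverse x
  set p := x.val with hpdef
  have hcastsub : ∀ v : ℕ, v ≤ k + 1 → ((k + 1 - v : ℕ) : ZMod k) = 1 - ((v : ℕ) : ZMod k) := by
    intro v hv
    rw [Nat.cast_sub hv]
    push_cast [ZMod.natCast_self]
    ring
  rcases Nat.lt_trichotomy p I with hlt | heq | hgt
  · have hsub : ((I : ℕ) : ZMod k) - x = (((I - p : ℕ) : ℕ) : ZMod k) := by
      rw [Nat.cast_sub (by omega : p ≤ I), hx]
    rcases Nat.eq_zero_or_pos p with h0 | h1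
    · have hr : srefl k π p = 0 := by
        rw [srefl, if_pos]; simp [Finset.mem_Icc, h0]
      have hIp : I - p = I := by omega
      rw [hIp] at hsub
      simp only [hatP, ← hpdef, hr, hsub, ZMod.val_cast_of_lt hIk, hπI]
      simp
    · have hr : srefl k π p = k + 1 - π (I - p) := by
        rw [srefl, if_neg (by simp only [Finset.mem_Icc, not_not]; omega), if_pos hlt]
      have harg : I - p ∈ Set.Icc 1 (k - 1) := Set.mem_Icc.mpr ⟨by omega, by omega⟩
      have hval := hπ.1.1 harg
      simp only [Set.mem_Icc] at hval
      simp only [hatP, ← hpdef, hr, hsub, ZMod.val_cast_of_lt (show I - p < k by omega)]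
      rw [hcastsub _ (by omega)]
  · have hr : srefl k π p = 1 := by
      rw [srefl, if_neg (by simp only [Finset.mem_Icc, not_not]; omega),
        if_neg (by omega), if_pos heq]
    have hsub : ((I : ℕ) : ZMod k) - x = 0 := by
      rw [← hx, ← heq]; ring
    have h0 : π 0 = 0 := hπ.2 0 (by simp [Set.mem_Icc])
    simp only [hatP, ← hpdef, hr, hsub, ZMod.val_zero, h0]
    simp
  · have hple : p ≤ k - 1 := by omega
    have hr : srefl k π p = k + 1 - π (k + I - p) := by
      rw [srefl, if_neg (by simp only [Finset.mem_Icc, not_not]; omega),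
        if_neg (by omega), if_neg (by omega)]
    have hsub : ((I : ℕ) : ZMod k) - x = (((k + I - p : ℕ) : ℕ) : ZMod k) := by
      rw [Nat.cast_sub (by omega : p ≤ k + I), ← hx]
      push_cast [ZMod.natCast_self]
      ring
    have harg : k + I - p ∈ Set.Icc 1 (k - 1) := Set.mem_Icc.mpr ⟨by omega, by omega⟩
    have hval := hπ.1.1 harg
    simp only [Set.mem_Icc] at hval
    simp only [hatP, ← hpdef, hr, hsub, ZMod.val_cast_of_lt (show k + I - p < k by omega)]
    rw [hcastsub _ (by omega)]

lemma srefl_norm (hk : 2 ≤ k) (hπ : OneLine k π) : NormP k (srefl k π) := by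
  obtain ⟨hI1, hI2, hπI⟩ := posOf_spec hk hπ (le_refl 1) (by omega : 1 ≤ k - 1)
  set I := posOf k π 1 with hIdef
  have hmemI : I ∈ Set.Icc 1 (k - 1) := Set.mem_Icc.mpr ⟨hI1, hI2⟩
  constructor
  · intro p hp
    rw [srefl, if_pos]
    simpa [Finset.mem_Icc, Set.mem_Icc] using hp
  · intro p hp
    simp only [Set.mem_Icc] at hp
    rcases Nat.lt_trichotomy p I with hlt | heq | hgt
    · rw [srefl, if_neg (by simp only [Finset.mem_Icc, not_not]; omega), if_pos hlt, ← hIdef]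
      have harg : I - p ∈ Set.Icc 1 (k - 1) := Set.mem_Icc.mpr ⟨by omega, by omega⟩
      have hval := hπ.1.1 harg
      simp only [Set.mem_Icc] at hval
      have hne : π (I - p) ≠ 1 := by
        intro he
        have := hπ.1.2.1 harg hmemI (he.trans hπI.symm)
        omega
      simp only [Set.mem_Icc]; omega
    · rw [srefl, if_neg (by simp only [Finset.mem_Icc, not_not]; omega),
        if_neg (by omega), if_pos heq]
      simp only [Set.mem_Icc]; omega
    · rw [srefl, if_neg (by simp only [Finset.mem_Icc, not_not]; omega),
        if_neg (by omega), if_neg (by omega), ← hIdef]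
      have harg : k + I - p ∈ Set.Icc 1 (k - 1) := Set.mem_Icc.mpr ⟨by omega, by omega⟩
      have hval := hπ.1.1 harg
      simp only [Set.mem_Icc] at hval
      have hne : π (k + I - p) ≠ 1 := by
        intro he
        have := hπ.1.2.1 harg hmemI (he.trans hπI.symm)
        omega
      simp only [Set.mem_Icc]; omega

lemma srefl_oneline (hk : 2 ≤ k) (hπ : OneLine k π) : OneLine k (srefl k π) := by
  haveI : NeZero k := ⟨by omega⟩
  refine oneline_of hk (srefl_norm hk hπ) ⟨?_, ?_⟩
  · intro x y hxy
    rw [srefl_hat hk hπ, srefl_hat hk hπ] at hxy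
    have h2 : hatP k π (((posOf k π 1 : ℕ) : ZMod k) - x)
        = hatP k π (((posOf k π 1 : ℕ) : ZMod k) - y) := by
      linear_combination -hxy
    have h3 := hat_inj hk hπ h2
    linear_combination -h3
  · intro y
    obtain ⟨z, hz⟩ := (hat_bij hk hπ).2 (1 - y)
    refine ⟨((posOf k π 1 : ℕ) : ZMod k) - z, ?_⟩
    rw [srefl_hat hk hπ, sub_sub_cancel, hz]
    ring

end DihedralAux

theorem stmt9 (k : ℕ) (hk : 2 ≤ k) :
    (∀ π, OneLine k π → (rot k)^[k] π = π) ∧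
    (∀ π, OneLine k π → srefl k (srefl k π) = π) ∧
    (∀ π, OneLine k π → rot k (srefl k (rot k (srefl k π))) = π) := by
  haveI : NeZero k := ⟨by omega⟩
  refine ⟨?_, ?_, ?_⟩
  · -- r^k = id
    intro π hπ
    have hbij := hat_bij hk hπ
    set e : ZMod k ≃ ZMod k := Equiv.ofBijective _ hbij with hedef
    have he0 : e.symm 0 = 0 := by
      have h0 : e 0 = 0 := hat_zero hk hπ.normP
      rw [Equiv.symm_apply_eq]
      exact h0.symm
    have key : ∀ m : ℕ, OneLine k ((rot k)^[m] π) ∧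
        ∀ x, hatP k ((rot k)^[m] π) x
          = hatP k π (x + e.symm (-((m : ℕ) : ZMod k))) + ((m : ℕ) : ZMod k) := by
      intro m
      induction m with
      | zero =>
        refine ⟨hπ, fun x => ?_⟩
        simp [he0]
      | succ m ih =>
        obtain ⟨ihO, ihE⟩ := ih
        refine ⟨by rw [Function.iterate_succ_apply']; exact rot_oneline hk ihO, fun x => ?_⟩
        rw [Function.iterate_succ_apply', rot_hat hk ihO, ihE]
        set T' : ZMod k := ((posOf k ((rot k)^[m] π) (k - 1) : ℕ) : ZMod k) with hT'def
        have hT' : hatP k ((rot k)^[m] π) T' = -1 := by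
          rw [hT'def, hat_posOf hk ihO (by omega : 1 ≤ k - 1) (le_refl (k - 1)), castk1 hk]
        rw [ihE] at hT'
        have hsm : T' + e.symm (-((m : ℕ) : ZMod k)) = e.symm (-(((m + 1 : ℕ) : ℕ)) : ZMod k) := by
          have : e (T' + e.symm (-((m : ℕ) : ZMod k))) = -(((m + 1 : ℕ) : ℕ) : ZMod k) := by
            show hatP k π (T' + e.symm (-((m : ℕ) : ZMod k))) = _
            push_cast
            linear_combination hT'
          rw [← this, Equiv.symm_apply_apply]
        rw [← hsm]
        push_cast
        ring_nf
    obtain ⟨hO, hE⟩ := key k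
    refine hat_eq_imp hk hO.normP hπ.normP fun x => ?_
    rw [hE x]
    simp [ZMod.natCast_self, he0]
  · -- s^2 = id
    intro π hπ
    have h1 : OneLine k (srefl k π) := srefl_oneline hk hπ
    set ι : ZMod k := ((posOf k π 1 : ℕ) : ZMod k) with hιdef
    set ι₂ : ZMod k := ((posOf k (srefl k π) 1 : ℕ) : ZMod k) with hι₂def
    have hfι : hatP k π ι = 1 := by
      rw [hιdef, hat_posOf hk hπ (le_refl 1) (by omega)]; norm_num
    have hgι₂ : hatP k (srefl k π) ι₂ = 1 := by
      rw [hι₂def, hat_posOf hk h1 (le_refl 1) (by omega)]; norm_num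
    rw [srefl_hat hk hπ, ← hιdef] at hgι₂
    have hz : hatP k π (ι - ι₂) = hatP k π 0 := by
      rw [hat_zero hk hπ.normP]
      linear_combination -hgι₂
    have hι₂eq : ι₂ = ι := by
      have := hat_inj hk hπ hz
      linear_combination -this
    refine hat_eq_imp hk (srefl_oneline hk h1).normP hπ.normP fun x => ?_
    rw [srefl_hat hk h1, ← hι₂def, srefl_hat hk hπ, ← hιdef, hι₂eq, sub_sub_cancel,
      sub_sub_cancel]
  · -- (rs)^2 = id
    intro π hπ
    have hσ : OneLine k (srefl k π) := srefl_oneline hk hπ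
    have hρ : OneLine k (rot k (srefl k π)) := rot_oneline hk hσ
    have hσ₂ : OneLine k (srefl k (rot k (srefl k π))) := srefl_oneline hk hρ
    set ι : ZMod k := ((posOf k π 1 : ℕ) : ZMod k) with hιdef
    set τ₁ : ZMod k := ((posOf k (srefl k π) (k - 1) : ℕ) : ZMod k) with hτ₁def
    set ι₂ : ZMod k := ((posOf k (rot k (srefl k π)) 1 : ℕ) : ZMod k) with hι₂def
    set τ₂ : ZMod k := ((posOf k (srefl k (rot k (srefl k π))) (k - 1) : ℕ) : ZMod k) with hτ₂def
    have hfι : hatP k π ι = 1 := by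
      rw [hιdef, hat_posOf hk hπ (le_refl 1) (by omega)]; norm_num
    have hgτ₁ : hatP k (srefl k π) τ₁ = -1 := by
      rw [hτ₁def, hat_posOf hk hσ (by omega : 1 ≤ k - 1) (le_refl (k - 1)), castk1 hk]
    have hhι₂ : hatP k (rot k (srefl k π)) ι₂ = 1 := by
      rw [hι₂def, hat_posOf hk hρ (le_refl 1) (by omega)]; norm_num
    have hh2τ₂ : hatP k (srefl k (rot k (srefl k π))) τ₂ = -1 := by
      rw [hτ₂def, hat_posOf hk hσ₂ (by omega : 1 ≤ k - 1) (le_refl (k - 1)), castk1 hk]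
    -- unfold the hats
    rw [srefl_hat hk hπ, ← hιdef] at hgτ₁
    rw [rot_hat hk hσ, ← hτ₁def, srefl_hat hk hπ, ← hιdef] at hhι₂
    rw [srefl_hat hk hρ, ← hι₂def, rot_hat hk hσ, ← hτ₁def, srefl_hat hk hπ, ← hιdef] at hh2τ₂
    -- derive ι₂ = -τ₁
    have e1 : hatP k π (ι - (ι₂ + τ₁)) = hatP k π ι := by
      rw [hfι]
      linear_combination -hhι₂
    have hι₂eq : ι₂ = -τ₁ := by
      have := hat_inj hk hπ e1
      linear_combination -this
    -- derive τ₂ = -ι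
    have e2 : hatP k π (ι - (ι₂ - τ₂ + τ₁)) = hatP k π 0 := by
      rw [hat_zero hk hπ.normP]
      linear_combination hh2τ₂
    have hτ₂eq : τ₂ = -ι := by
      have := hat_inj hk hπ e2
      rw [hι₂eq] at this
      linear_combination this
    refine hat_eq_imp hk (rot_oneline hk hσ₂).normP hπ.normP fun x => ?_
    rw [rot_hat hk hσ₂, ← hτ₂def, srefl_hat hk hρ, ← hι₂def, rot_hat hk hσ, ← hτ₁def,
      srefl_hat hk hπ, ← hιdef, hι₂eq, hτ₂eq]
    have harg : ι - (-τ₁ - (x + -ι) + τ₁) = x := by ring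
    rw [harg]
    ring

end
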